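/- arXiv:1806.02638 — 2 statements merged into one kernel-verified Lean document; each statement's English description precedes it below -/
import Mathlib

section
/- In the Leader Election protocol, every configuration reachable from the initial configuration (in which all N agents are in the initial state l0, counted as leaders) contains at least one agent whose role is leader (or is still in state l0). That is, during any execution of the protocol, at least one leader always exists in the population. -/
namespace LeaderElectionProtocol

/-- A state of an agent in the Leader Election protocol: either the initial state `l0`
(a potential leader), or a role (leader/follower) together with a tuple `(r, e)` of a
random number `r` and a round `e`. -/
inductive St where
  | init : St
  | leader (r e : ℕ) : St
  | follower (r e : ℕ) : St

/-- Tuple `(r, e)` is strictly smaller than `(r', e')`: compared lexicographically,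
round first, then random number. -/
def tlt (a b : ℕ × ℕ) : Prop := a.2 < b.2 ∨ (a.2 = b.2 ∧ a.1 < b.1)

/-- Tuple `(r, e)` is smaller than or equal to `(r', e')`. -/
def tle (a b : ℕ × ℕ) : Prop := tlt a b ∨ a = b

/-- A configuration assigns a state to each of the `N` agents. -/
def Cfg (N : ℕ) := Fin N → St

/-- One step of the Leader Election protocol with `N` agents and random numbers drawn
from `{1, …, m}`: two distinct agents `i ≠ j` interact and apply one of the
(nondeterministic) transition rules. -/
inductive Step (N m : ℕ) : Cfg N → Cfg N → Prop where
  /-- (i) Two `l0` agents meet: one becomes a leader and the other a follower, both with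
  tuple `(r, 1)` for an arbitrary `r ∈ {1, …, m}`. -/
  | both_init (c : Cfg N) (i j : Fin N) (r : ℕ) (hij : i ≠ j)
      (hi : c i = .init) (hj : c j = .init) (hr1 : 1 ≤ r) (hrm : r ≤ m) :
      Step N m c (Function.update (Function.update c i (.leader r 1)) j (.follower r 1))
  /-- (ii) An `l0` agent meeting a leader becomes a follower with the leader's tuple. -/
  | init_meets_leader (c : Cfg N) (i j : Fin N) (r e : ℕ) (hij : i ≠ j)
      (hi : c i = .init) (hj : c j = .leader r e) :
      Step N m c (Function.update c i (.follower r e))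
  /-- (ii) An `l0` agent meeting a follower becomes a follower with that tuple. -/
  | init_meets_follower (c : Cfg N) (i j : Fin N) (r e : ℕ) (hij : i ≠ j)
      (hi : c i = .init) (hj : c j = .follower r e) :
      Step N m c (Function.update c i (.follower r e))
  /-- (iii) Two followers meet: both adopt the larger of their two tuples. -/
  | followers (c : Cfg N) (i j : Fin N) (r₁ e₁ r₂ e₂ : ℕ) (hij : i ≠ j)
      (hi : c i = .follower r₁ e₁) (hj : c j = .follower r₂ e₂)
      (hw : tle (r₂, e₂) (r₁, e₁)) :
      Step N m c (Function.update c j (.follower r₁ e₁))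
  /-- (iv) Two leaders meet: both adopt the (weakly) larger tuple, the agent whose tuple
  did not win becomes a follower, the other remains a leader. -/
  | leaders (c : Cfg N) (i j : Fin N) (r₁ e₁ r₂ e₂ : ℕ) (hij : i ≠ j)
      (hi : c i = .leader r₁ e₁) (hj : c j = .leader r₂ e₂)
      (hw : tle (r₂, e₂) (r₁, e₁)) :
      Step N m c (Function.update c j (.follower r₁ e₁))
  /-- (iv) Variant in which the surviving leader moreover replaces its tuple `(r₁, e₁)`
  by `(r', e₁ + 1)` for an arbitrary `r' ∈ {1, …, m}`. -/
  | leaders_inc (c : Cfg N) (i j : Fin N) (r₁ e₁ r₂ e₂ r' : ℕ) (hij : i ≠ j)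
      (hi : c i = .leader r₁ e₁) (hj : c j = .leader r₂ e₂)
      (hw : tle (r₂, e₂) (r₁, e₁)) (hr1 : 1 ≤ r') (hrm : r' ≤ m) :
      Step N m c
        (Function.update (Function.update c j (.follower r₁ e₁)) i (.leader r' (e₁ + 1)))
  /-- (v) A leader meeting a follower with a strictly larger tuple becomes a follower
  with the follower's tuple. -/
  | leader_loses (c : Cfg N) (i j : Fin N) (r₁ e₁ r₂ e₂ : ℕ) (hij : i ≠ j)
      (hi : c i = .leader r₁ e₁) (hj : c j = .follower r₂ e₂)
      (hw : tlt (r₁, e₁) (r₂, e₂)) :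
      Step N m c (Function.update c i (.follower r₂ e₂))
  /-- (vi) A leader meeting a follower with an equal or smaller tuple remains a leader
  and the follower adopts the leader's tuple. -/
  | leader_wins (c : Cfg N) (i j : Fin N) (r₁ e₁ r₂ e₂ : ℕ) (hij : i ≠ j)
      (hi : c i = .leader r₁ e₁) (hj : c j = .follower r₂ e₂)
      (hw : tle (r₂, e₂) (r₁, e₁)) :
      Step N m c (Function.update c j (.follower r₁ e₁))
  /-- (vi) Variant in which the surviving leader moreover replaces its tuple `(r₁, e₁)`
  by `(r', e₁ + 1)` for an arbitrary `r' ∈ {1, …, m}`. -/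
  | leader_wins_inc (c : Cfg N) (i j : Fin N) (r₁ e₁ r₂ e₂ r' : ℕ) (hij : i ≠ j)
      (hi : c i = .leader r₁ e₁) (hj : c j = .follower r₂ e₂)
      (hw : tle (r₂, e₂) (r₁, e₁)) (hr1 : 1 ≤ r') (hrm : r' ≤ m) :
      Step N m c
        (Function.update (Function.update c j (.follower r₁ e₁)) i (.leader r' (e₁ + 1)))

/-- Reachability: the reflexive–transitive closure of the step relation. -/
def Reachable (N m : ℕ) : Cfg N → Cfg N → Prop := Relation.ReflTransGen (Step N m)

/-- The initial configuration, in which all agents are in the initial state `l0`. -/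
def initCfg (N : ℕ) : Cfg N := fun _ => St.init

end LeaderElectionProtocol

open LeaderElectionProtocol

namespace LEAux

lemma tle_refl (a : ℕ × ℕ) : tle a a := Or.inr rfl

lemma tle_total (a b : ℕ × ℕ) : tle a b ∨ tle b a := by
  rcases a with ⟨a1, a2⟩; rcases b with ⟨b1, b2⟩
  simp only [tle, tlt, Prod.mk.injEq]
  omega

lemma tle_trans {a b c : ℕ × ℕ} (h1 : tle a b) (h2 : tle b c) : tle a c := by
  rcases a with ⟨a1, a2⟩; rcases b with ⟨b1, b2⟩; rcases c with ⟨c1, c2⟩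
  simp only [tle, tlt, Prod.mk.injEq] at *
  omega

lemma tle_succ {a : ℕ × ℕ} {r e r' : ℕ} (h : tle a (r, e)) : tle a (r', e + 1) := by
  rcases a with ⟨a1, a2⟩
  simp only [tle, tlt, Prod.mk.injEq] at *
  omega

lemma eq_tup_follower {r e rk ek : ℕ}
    (h : St.follower r e = St.leader rk ek ∨ St.follower r e = St.follower rk ek) :
    rk = r ∧ ek = e := by
  rcases h with h | h
  · exact absurd h (by simp)
  · injection h with h1 h2; exact ⟨h1.symm, h2.symm⟩

lemma eq_tup_leader {r e rk ek : ℕ}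
    (h : St.leader r e = St.leader rk ek ∨ St.leader r e = St.follower rk ek) :
    rk = r ∧ ek = e := by
  rcases h with h | h
  · injection h with h1 h2; exact ⟨h1.symm, h2.symm⟩
  · exact absurd h (by simp)

lemma eq_tup_init {rk ek : ℕ}
    (h : St.init = St.leader rk ek ∨ St.init = St.follower rk ek) : False := by
  rcases h with h | h <;> simp at h

/-- The invariant: either all agents are still in the initial state, or there is a
leader whose tuple is (weakly) maximal among all tuples in the population. -/
def Inv {N : ℕ} (c : Cfg N) : Prop :=
  (∀ j, c j = St.init) ∨
    ∃ i r e, c i = St.leader r e ∧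
      ∀ j r' e', (c j = St.leader r' e' ∨ c j = St.follower r' e') → tle (r', e') (r, e)

lemma inv_step {N m : ℕ} {c c' : Cfg N} (h : Step N m c c') (hI : Inv c) : Inv c' := by
  cases h with
  | both_init i j r hij hi hj hr1 hrm =>
    have hji : j ≠ i := Ne.symm hij
    rcases hI with hall | ⟨L, rL, eL, hL, hmax⟩
    · refine Or.inr ⟨i, r, 1, ?_, ?_⟩
      · simp [Function.update_apply, Function.update_apply (f := c), hij]
      · intro k rk ek hk
        simp only [Function.update_apply, Function.update_apply (f := c)] at hk
        split_ifs at hk with h1 h2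
        · simp only [false_or, or_false, St.follower.injEq, St.leader.injEq] at hk; obtain ⟨h3, h4⟩ := hk; subst h3; subst h4; exact tle_refl _
        · simp only [false_or, or_false, St.follower.injEq, St.leader.injEq] at hk; obtain ⟨h3, h4⟩ := hk; subst h3; subst h4; exact tle_refl _
        · rw [hall k] at hk; exact absurd hk eq_tup_init
    · have hLi : L ≠ i := fun h => by rw [h, hi] at hL; exact St.noConfusion hL
      have hLj : L ≠ j := fun h => by rw [h, hj] at hL; exact St.noConfusion hL
      rcases tle_total (r, 1) (rL, eL) with hc1 | hc1
      · refine Or.inr ⟨L, rL, eL, ?_, ?_⟩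
        · simp [Function.update_apply, Function.update_apply (f := c), hLi, hLj, hL]
        · intro k rk ek hk
          simp only [Function.update_apply, Function.update_apply (f := c)] at hk
          split_ifs at hk with h1 h2
          · simp only [false_or, or_false, St.follower.injEq, St.leader.injEq] at hk; obtain ⟨h3, h4⟩ := hk; subst h3; subst h4; exact hc1
          · simp only [false_or, or_false, St.follower.injEq, St.leader.injEq] at hk; obtain ⟨h3, h4⟩ := hk; subst h3; subst h4; exact hc1
          · exact hmax k rk ek hk
      · refine Or.inr ⟨i, r, 1, ?_, ?_⟩
        · simp [Function.update_apply, Function.update_apply (f := c), hij]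
        · intro k rk ek hk
          simp only [Function.update_apply, Function.update_apply (f := c)] at hk
          split_ifs at hk with h1 h2
          · simp only [false_or, or_false, St.follower.injEq, St.leader.injEq] at hk; obtain ⟨h3, h4⟩ := hk; subst h3; subst h4; exact tle_refl _
          · simp only [false_or, or_false, St.follower.injEq, St.leader.injEq] at hk; obtain ⟨h3, h4⟩ := hk; subst h3; subst h4; exact tle_refl _
          · exact tle_trans (hmax k rk ek hk) hc1
  | init_meets_leader i j r e hij hi hj =>
    rcases hI with hall | ⟨L, rL, eL, hL, hmax⟩
    · exfalso; rw [hall j] at hj; exact St.noConfusion hj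
    · have hLi : L ≠ i := fun h => by rw [h, hi] at hL; exact St.noConfusion hL
      refine Or.inr ⟨L, rL, eL, ?_, ?_⟩
      · simp [Function.update_apply, Function.update_apply (f := c), hLi, hL]
      · intro k rk ek hk
        simp only [Function.update_apply, Function.update_apply (f := c)] at hk
        split_ifs at hk with h1
        · simp only [false_or, or_false, St.follower.injEq, St.leader.injEq] at hk; obtain ⟨h3, h4⟩ := hk; subst h3; subst h4
          exact hmax j r e (Or.inl hj)
        · exact hmax k rk ek hk
  | init_meets_follower i j r e hij hi hj =>
    rcases hI with hall | ⟨L, rL, eL, hL, hmax⟩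
    · exfalso; rw [hall j] at hj; exact St.noConfusion hj
    · have hLi : L ≠ i := fun h => by rw [h, hi] at hL; exact St.noConfusion hL
      refine Or.inr ⟨L, rL, eL, ?_, ?_⟩
      · simp [Function.update_apply, Function.update_apply (f := c), hLi, hL]
      · intro k rk ek hk
        simp only [Function.update_apply, Function.update_apply (f := c)] at hk
        split_ifs at hk with h1
        · simp only [false_or, or_false, St.follower.injEq, St.leader.injEq] at hk; obtain ⟨h3, h4⟩ := hk; subst h3; subst h4
          exact hmax j r e (Or.inr hj)
        · exact hmax k rk ek hk
  | followers i j r₁ e₁ r₂ e₂ hij hi hj hw =>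
    rcases hI with hall | ⟨L, rL, eL, hL, hmax⟩
    · exfalso; rw [hall j] at hj; exact St.noConfusion hj
    · have hLj : L ≠ j := fun h => by rw [h, hj] at hL; exact St.noConfusion hL
      refine Or.inr ⟨L, rL, eL, ?_, ?_⟩
      · simp [Function.update_apply, Function.update_apply (f := c), hLj, hL]
      · intro k rk ek hk
        simp only [Function.update_apply, Function.update_apply (f := c)] at hk
        split_ifs at hk with h1
        · simp only [false_or, or_false, St.follower.injEq, St.leader.injEq] at hk; obtain ⟨h3, h4⟩ := hk; subst h3; subst h4
          exact hmax i r₁ e₁ (Or.inr hi)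
        · exact hmax k rk ek hk
  | leaders i j r₁ e₁ r₂ e₂ hij hi hj hw =>
    rcases hI with hall | ⟨L, rL, eL, hL, hmax⟩
    · exfalso; rw [hall j] at hj; exact St.noConfusion hj
    · by_cases hLj : L = j
      · -- the maximal leader is the loser; then (r₂,e₂) = (rL,eL) ≤ (r₁,e₁),
        -- so i is now maximal
        subst hLj; rw [hj] at hL
        injection hL with h1 h2; subst h1; subst h2
        have hmax' : ∀ a, tle a (r₂, e₂) → tle a (r₁, e₁) := fun a ha => tle_trans ha hw
        refine Or.inr ⟨i, r₁, e₁, ?_, ?_⟩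
        · simp [Function.update_apply, Function.update_apply (f := c), hij, hi]
        · intro k rk ek hk
          simp only [Function.update_apply, Function.update_apply (f := c)] at hk
          split_ifs at hk with h1
          · simp only [false_or, or_false, St.follower.injEq, St.leader.injEq] at hk; obtain ⟨h3, h4⟩ := hk; subst h3; subst h4; exact tle_refl _
          · exact hmax' _ (hmax k rk ek hk)
      · refine Or.inr ⟨L, rL, eL, ?_, ?_⟩
        · simp [Function.update_apply, Function.update_apply (f := c), hLj, hL]
        · intro k rk ek hk
          simp only [Function.update_apply, Function.update_apply (f := c)] at hk
          split_ifs at hk with h1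
          · simp only [false_or, or_false, St.follower.injEq, St.leader.injEq] at hk; obtain ⟨h3, h4⟩ := hk; subst h3; subst h4
            exact hmax i r₁ e₁ (Or.inl hi)
          · exact hmax k rk ek hk
  | leaders_inc i j r₁ e₁ r₂ e₂ r' hij hi hj hw hr1 hrm =>
    rcases hI with hall | ⟨L, rL, eL, hL, hmax⟩
    · exfalso; rw [hall j] at hj; exact St.noConfusion hj
    · have hi1 : tle (r₁, e₁) (rL, eL) := hmax i r₁ e₁ (Or.inl hi)
      by_cases hLij : L = i ∨ L = j
      · have hLmax : tle (rL, eL) (r₁, e₁) := by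
          rcases hLij with hLi | hLj
          · subst hLi; rw [hi] at hL
            injection hL with h1 h2; subst h1; subst h2; exact tle_refl _
          · subst hLj; rw [hj] at hL
            injection hL with h1 h2; subst h1; subst h2; exact hw
        refine Or.inr ⟨i, r', e₁ + 1, ?_, ?_⟩
        · simp [Function.update_apply, Function.update_apply (f := c)]
        · intro k rk ek hk
          simp only [Function.update_apply, Function.update_apply (f := c)] at hk
          split_ifs at hk with h1 h2
          · simp only [false_or, or_false, St.follower.injEq, St.leader.injEq] at hk; obtain ⟨h3, h4⟩ := hk; subst h3; subst h4; exact tle_refl _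
          · simp only [false_or, or_false, St.follower.injEq, St.leader.injEq] at hk; obtain ⟨h3, h4⟩ := hk; subst h3; subst h4
            exact tle_succ (tle_refl _)
          · exact tle_succ (tle_trans (hmax k rk ek hk) hLmax)
      · push_neg at hLij
        obtain ⟨hLi, hLj⟩ := hLij
        rcases tle_total (r', e₁ + 1) (rL, eL) with hc1 | hc1
        · refine Or.inr ⟨L, rL, eL, ?_, ?_⟩
          · simp [Function.update_apply, Function.update_apply (f := c), hLi, hLj, hL]
          · intro k rk ek hk
            simp only [Function.update_apply, Function.update_apply (f := c)] at hk
            split_ifs at hk with h1 h2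
            · simp only [false_or, or_false, St.follower.injEq, St.leader.injEq] at hk; obtain ⟨h3, h4⟩ := hk; subst h3; subst h4; exact hc1
            · simp only [false_or, or_false, St.follower.injEq, St.leader.injEq] at hk; obtain ⟨h3, h4⟩ := hk; subst h3; subst h4
              exact tle_trans hi1 (tle_refl _)
            · exact hmax k rk ek hk
        · refine Or.inr ⟨i, r', e₁ + 1, ?_, ?_⟩
          · simp [Function.update_apply, Function.update_apply (f := c)]
          · intro k rk ek hk
            simp only [Function.update_apply, Function.update_apply (f := c)] at hk
            split_ifs at hk with h1 h2
            · simp only [false_or, or_false, St.follower.injEq, St.leader.injEq] at hk; obtain ⟨h3, h4⟩ := hk; subst h3; subst h4; exact tle_refl _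
            · simp only [false_or, or_false, St.follower.injEq, St.leader.injEq] at hk; obtain ⟨h3, h4⟩ := hk; subst h3; subst h4
              exact tle_succ (tle_refl _)
            · exact tle_trans (hmax k rk ek hk) hc1
  | leader_loses i j r₁ e₁ r₂ e₂ hij hi hj hw =>
    rcases hI with hall | ⟨L, rL, eL, hL, hmax⟩
    · exfalso; rw [hall j] at hj; exact St.noConfusion hj
    · have hLi : L ≠ i := by
        intro h; subst h; rw [hi] at hL
        injection hL with h1 h2; subst h1; subst h2
        have h2 : tle (r₂, e₂) (r₁, e₁) := hmax j r₂ e₂ (Or.inr hj)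
        simp only [tle, tlt, Prod.mk.injEq] at hw h2
        omega
      refine Or.inr ⟨L, rL, eL, ?_, ?_⟩
      · simp [Function.update_apply, Function.update_apply (f := c), hLi, hL]
      · intro k rk ek hk
        simp only [Function.update_apply, Function.update_apply (f := c)] at hk
        split_ifs at hk with h1
        · simp only [false_or, or_false, St.follower.injEq, St.leader.injEq] at hk; obtain ⟨h3, h4⟩ := hk; subst h3; subst h4
          exact hmax j r₂ e₂ (Or.inr hj)
        · exact hmax k rk ek hk
  | leader_wins i j r₁ e₁ r₂ e₂ hij hi hj hw =>
    rcases hI with hall | ⟨L, rL, eL, hL, hmax⟩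
    · exfalso; rw [hall j] at hj; exact St.noConfusion hj
    · have hLj : L ≠ j := fun h => by rw [h, hj] at hL; exact St.noConfusion hL
      refine Or.inr ⟨L, rL, eL, ?_, ?_⟩
      · simp [Function.update_apply, Function.update_apply (f := c), hLj, hL]
      · intro k rk ek hk
        simp only [Function.update_apply, Function.update_apply (f := c)] at hk
        split_ifs at hk with h1
        · simp only [false_or, or_false, St.follower.injEq, St.leader.injEq] at hk; obtain ⟨h3, h4⟩ := hk; subst h3; subst h4
          exact hmax i r₁ e₁ (Or.inl hi)
        · exact hmax k rk ek hk
  | leader_wins_inc i j r₁ e₁ r₂ e₂ r' hij hi hj hw hr1 hrm =>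
    rcases hI with hall | ⟨L, rL, eL, hL, hmax⟩
    · exfalso; rw [hall j] at hj; exact St.noConfusion hj
    · have hi1 : tle (r₁, e₁) (rL, eL) := hmax i r₁ e₁ (Or.inl hi)
      by_cases hLi : L = i
      · rw [hLi, hi] at hL
        injection hL with h1 h2; subst h1; subst h2
        refine Or.inr ⟨i, r', e₁ + 1, ?_, ?_⟩
        · simp [Function.update_apply, Function.update_apply (f := c)]
        · intro k rk ek hk
          simp only [Function.update_apply, Function.update_apply (f := c)] at hk
          split_ifs at hk with h1 h2
          · simp only [false_or, or_false, St.follower.injEq, St.leader.injEq] at hk; obtain ⟨h3, h4⟩ := hk; subst h3; subst h4; exact tle_refl _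
          · simp only [false_or, or_false, St.follower.injEq, St.leader.injEq] at hk; obtain ⟨h3, h4⟩ := hk; subst h3; subst h4
            exact tle_succ (tle_refl _)
          · exact tle_succ (hmax k rk ek hk)
      · have hLj : L ≠ j := fun h => by rw [h, hj] at hL; exact St.noConfusion hL
        rcases tle_total (r', e₁ + 1) (rL, eL) with hc1 | hc1
        · refine Or.inr ⟨L, rL, eL, ?_, ?_⟩
          · simp [Function.update_apply, Function.update_apply (f := c), hLi, hLj, hL]
          · intro k rk ek hk
            simp only [Function.update_apply, Function.update_apply (f := c)] at hk
            split_ifs at hk with h1 h2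
            · simp only [false_or, or_false, St.follower.injEq, St.leader.injEq] at hk; obtain ⟨h3, h4⟩ := hk; subst h3; subst h4; exact hc1
            · simp only [false_or, or_false, St.follower.injEq, St.leader.injEq] at hk; obtain ⟨h3, h4⟩ := hk; subst h3; subst h4; exact hi1
            · exact hmax k rk ek hk
        · refine Or.inr ⟨i, r', e₁ + 1, ?_, ?_⟩
          · simp [Function.update_apply, Function.update_apply (f := c)]
          · intro k rk ek hk
            simp only [Function.update_apply, Function.update_apply (f := c)] at hk
            split_ifs at hk with h1 h2
            · simp only [false_or, or_false, St.follower.injEq, St.leader.injEq] at hk; obtain ⟨h3, h4⟩ := hk; subst h3; subst h4; exact tle_refl _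
            · simp only [false_or, or_false, St.follower.injEq, St.leader.injEq] at hk; obtain ⟨h3, h4⟩ := hk; subst h3; subst h4
              exact tle_succ (tle_refl _)
            · exact tle_trans (hmax k rk ek hk) hc1

lemma inv_reachable {N m : ℕ} {c : Cfg N} (h : Reachable N m (initCfg N) c) :
    Inv c := by
  induction h with
  | refl => exact Or.inl fun _ => rfl
  | tail _ hstep ih => exact inv_step hstep ih

end LEAux

/-- in the Leader Election protocol, every configuration reachable from
the initial configuration (all `N` agents in the initial state `l0`, counted as leaders)
contains at least one agent whose role is leader or which is still in state `l0`:
at least one leader always exists in the population. -/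
theorem leader_always_exists (N m : ℕ) (hN : 2 ≤ N) (c : Cfg N)
    (hc : Reachable N m (initCfg N) c) :
    ∃ a : Fin N, c a = St.init ∨ ∃ r e : ℕ, c a = St.leader r e := by
  rcases LEAux.inv_reachable hc with hall | ⟨i, r, e, hi, _⟩
  · exact ⟨⟨0, by omega⟩, Or.inl (hall _)⟩
  · exact ⟨i, Or.inr ⟨r, e, hi⟩⟩
end

section
/- In the Leader Election protocol, in every configuration reachable from the all-l0 initial configuration in which at least one agent holds a tuple, the lexicographic maximum tuple present among all agents is held by at least one agent whose role is leader. -/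
namespace LeaderElectionProtocol

lemma tle_iff (a b : ℕ × ℕ) : tle a b ↔ a.2 < b.2 ∨ (a.2 = b.2 ∧ a.1 ≤ b.1) := by
  obtain ⟨a1, a2⟩ := a; obtain ⟨b1, b2⟩ := b
  simp only [tle, tlt, Prod.mk.injEq]
  constructor <;> intro h <;> omega

lemma tle_refl (a : ℕ × ℕ) : tle a a := Or.inr rfl

lemma tle_trans {a b c : ℕ × ℕ} (h1 : tle a b) (h2 : tle b c) : tle a c := by
  rw [tle_iff] at h1 h2 ⊢; omega

lemma tle_total (a b : ℕ × ℕ) : tle a b ∨ tle b a := by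
  rw [tle_iff, tle_iff]; omega

lemma tlt_tle_false {a b : ℕ × ℕ} (h1 : tlt a b) (h2 : tle b a) : False := by
  rw [tle_iff] at h2; rcases h1 with h | h <;> omega

lemma tlt_succ (r e r' : ℕ) : tlt (r, e) (r', e + 1) := Or.inl (Nat.lt_succ_self e)

/-- Some agent holds a tuple. -/
def HasTuple {N : ℕ} (c : Cfg N) : Prop :=
  ∃ a : Fin N, ∃ r e : ℕ, c a = St.leader r e ∨ c a = St.follower r e

/-- Some leader holds the maximum tuple. -/
def Good {N : ℕ} (c : Cfg N) : Prop :=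
  ∃ a : Fin N, ∃ r e : ℕ, c a = St.leader r e ∧
    ∀ b : Fin N, ∀ r' e' : ℕ,
      (c b = St.leader r' e' ∨ c b = St.follower r' e') → tle (r', e') (r, e)

lemma tuple_of_leader_eq {r e r' e' : ℕ}
    (h : St.leader r e = St.leader r' e' ∨ False) :
    r' = r ∧ e' = e := by
  rcases h with h | h
  · obtain ⟨h1, h2⟩ := St.leader.inj h; exact ⟨h1.symm, h2.symm⟩
  · exact h.elim

lemma tuple_of_follower_eq {r e r' e' : ℕ}
    (h : False ∨ St.follower r e = St.follower r' e') :
    r' = r ∧ e' = e := by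
  rcases h with h | h
  · exact h.elim
  · obtain ⟨h1, h2⟩ := St.follower.inj h; exact ⟨h1.symm, h2.symm⟩

lemma cfg_update_apply {N : ℕ} (c : Cfg N) (i : Fin N) (s : St) (b : Fin N) :
    Function.update c i s b = if b = i then s else c b := Function.update_apply c i s b

lemma cfg_update_apply2 {N : ℕ} (c : Cfg N) (i j : Fin N) (s t : St) (b : Fin N) :
    (Function.update (Function.update c i s) j t : Cfg N) b =
      if b = j then t else Function.update c i s b := Function.update_apply _ j t b

lemma step_good {N m : ℕ} {c c' : Cfg N} (hs : Step N m c c')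
    (ih : HasTuple c → Good c) : Good c' := by
  cases hs with
  | both_init i j r hij hi hj hr1 hrm =>
    by_cases hex : HasTuple c
    · obtain ⟨a, rm, em, ha, hmax⟩ := ih hex
      have hai : a ≠ i := by intro h; rw [h, hi] at ha; exact St.noConfusion ha
      have haj : a ≠ j := by intro h; rw [h, hj] at ha; exact St.noConfusion ha
      rcases tle_total (r, 1) (rm, em) with hle | hle
      · refine ⟨a, rm, em, ?_, ?_⟩
        · simp [cfg_update_apply, hai, haj]; exact ha
        · intro b r' e' hb
          simp only [cfg_update_apply2, cfg_update_apply] at hb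
          split_ifs at hb with h1 h2
          · obtain ⟨rfl, rfl⟩ := tuple_of_follower_eq hb; exact hle
          · obtain ⟨rfl, rfl⟩ := tuple_of_leader_eq hb; exact hle
          · exact hmax b r' e' hb
      · refine ⟨i, r, 1, ?_, ?_⟩
        · simp [cfg_update_apply, hij]
        · intro b r' e' hb
          simp only [cfg_update_apply2, cfg_update_apply] at hb
          split_ifs at hb with h1 h2
          · obtain ⟨rfl, rfl⟩ := tuple_of_follower_eq hb; exact tle_refl _
          · obtain ⟨rfl, rfl⟩ := tuple_of_leader_eq hb; exact tle_refl _
          · exact tle_trans (hmax b r' e' hb) hle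
    · refine ⟨i, r, 1, ?_, ?_⟩
      · simp [cfg_update_apply, hij]
      · intro b r' e' hb
        simp only [cfg_update_apply2, cfg_update_apply] at hb
        split_ifs at hb with h1 h2
        · obtain ⟨rfl, rfl⟩ := tuple_of_follower_eq hb; exact tle_refl _
        · obtain ⟨rfl, rfl⟩ := tuple_of_leader_eq hb; exact tle_refl _
        · exact absurd ⟨b, r', e', hb⟩ hex
  | init_meets_leader i j r e hij hi hj =>
    obtain ⟨a, rm, em, ha, hmax⟩ := ih ⟨j, r, e, Or.inl hj⟩
    have hai : a ≠ i := by intro h; rw [h, hi] at ha; exact St.noConfusion ha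
    refine ⟨a, rm, em, ?_, ?_⟩
    · simp [cfg_update_apply, hai]; exact ha
    · intro b r' e' hb
      simp only [cfg_update_apply] at hb
      split_ifs at hb with h1
      · obtain ⟨rfl, rfl⟩ := tuple_of_follower_eq hb
        exact hmax j _ _ (Or.inl hj)
      · exact hmax b r' e' hb
  | init_meets_follower i j r e hij hi hj =>
    obtain ⟨a, rm, em, ha, hmax⟩ := ih ⟨j, r, e, Or.inr hj⟩
    have hai : a ≠ i := by intro h; rw [h, hi] at ha; exact St.noConfusion ha
    refine ⟨a, rm, em, ?_, ?_⟩
    · simp [cfg_update_apply, hai]; exact ha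
    · intro b r' e' hb
      simp only [cfg_update_apply] at hb
      split_ifs at hb with h1
      · obtain ⟨rfl, rfl⟩ := tuple_of_follower_eq hb
        exact hmax j _ _ (Or.inr hj)
      · exact hmax b r' e' hb
  | followers i j r₁ e₁ r₂ e₂ hij hi hj hw =>
    obtain ⟨a, rm, em, ha, hmax⟩ := ih ⟨i, r₁, e₁, Or.inr hi⟩
    have haj : a ≠ j := by intro h; rw [h, hj] at ha; exact St.noConfusion ha
    refine ⟨a, rm, em, ?_, ?_⟩
    · simp [cfg_update_apply, haj]; exact ha
    · intro b r' e' hb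
      simp only [cfg_update_apply] at hb
      split_ifs at hb with h1
      · obtain ⟨rfl, rfl⟩ := tuple_of_follower_eq hb
        exact hmax i _ _ (Or.inr hi)
      · exact hmax b r' e' hb
  | leaders i j r₁ e₁ r₂ e₂ hij hi hj hw =>
    obtain ⟨a, rm, em, ha, hmax⟩ := ih ⟨i, r₁, e₁, Or.inl hi⟩
    by_cases haj : a = j
    · subst haj
      obtain ⟨h1, h2⟩ := St.leader.inj (ha.symm.trans hj)
      subst h1; subst h2
      refine ⟨i, r₁, e₁, ?_, ?_⟩
      · simp [cfg_update_apply, hij]; exact hi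
      · intro b r' e' hb
        simp only [cfg_update_apply] at hb
        split_ifs at hb with h1
        · obtain ⟨rfl, rfl⟩ := tuple_of_follower_eq hb; exact tle_refl _
        · exact tle_trans (hmax b r' e' hb) hw
    · refine ⟨a, rm, em, ?_, ?_⟩
      · simp [cfg_update_apply, haj]; exact ha
      · intro b r' e' hb
        simp only [cfg_update_apply] at hb
        split_ifs at hb with h1
        · obtain ⟨rfl, rfl⟩ := tuple_of_follower_eq hb
          exact hmax i _ _ (Or.inl hi)
        · exact hmax b r' e' hb
  | leaders_inc i j r₁ e₁ r₂ e₂ rn hij hi hj hw hr1 hrm =>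
    obtain ⟨a, rm, em, ha, hmax⟩ := ih ⟨i, r₁, e₁, Or.inl hi⟩
    rcases tle_total (rm, em) (rn, e₁ + 1) with hle | hle
    · refine ⟨i, rn, e₁ + 1, ?_, ?_⟩
      · simp [cfg_update_apply]
      · intro b r' e' hb
        simp only [cfg_update_apply2, cfg_update_apply] at hb
        split_ifs at hb with h1 h2
        · obtain ⟨rfl, rfl⟩ := tuple_of_leader_eq hb; exact tle_refl _
        · obtain ⟨rfl, rfl⟩ := tuple_of_follower_eq hb
          exact tle_trans (hmax i _ _ (Or.inl hi)) hle
        · exact tle_trans (hmax b r' e' hb) hle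
    · have hai : a ≠ i := by
        intro h; subst h
        obtain ⟨h1, h2⟩ := St.leader.inj (ha.symm.trans hi)
        subst h1; subst h2
        exact tlt_tle_false (tlt_succ _ _ rn) hle
      have haj : a ≠ j := by
        intro h; subst h
        obtain ⟨h1, h2⟩ := St.leader.inj (ha.symm.trans hj)
        subst h1; subst h2
        exact tlt_tle_false (tlt_succ _ _ rn) (tle_trans hle hw)
      refine ⟨a, rm, em, ?_, ?_⟩
      · simp [cfg_update_apply, hai, haj]; exact ha
      · intro b r' e' hb
        simp only [cfg_update_apply2, cfg_update_apply] at hb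
        split_ifs at hb with h1 h2
        · obtain ⟨rfl, rfl⟩ := tuple_of_leader_eq hb; exact hle
        · obtain ⟨rfl, rfl⟩ := tuple_of_follower_eq hb
          exact hmax i _ _ (Or.inl hi)
        · exact hmax b r' e' hb
  | leader_loses i j r₁ e₁ r₂ e₂ hij hi hj hw =>
    obtain ⟨a, rm, em, ha, hmax⟩ := ih ⟨i, r₁, e₁, Or.inl hi⟩
    have hai : a ≠ i := by
      intro h; subst h
      obtain ⟨h1, h2⟩ := St.leader.inj (ha.symm.trans hi)
      subst h1; subst h2
      exact tlt_tle_false hw (hmax j _ _ (Or.inr hj))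
    refine ⟨a, rm, em, ?_, ?_⟩
    · simp [cfg_update_apply, hai]; exact ha
    · intro b r' e' hb
      simp only [cfg_update_apply] at hb
      split_ifs at hb with h1
      · obtain ⟨rfl, rfl⟩ := tuple_of_follower_eq hb
        exact hmax j _ _ (Or.inr hj)
      · exact hmax b r' e' hb
  | leader_wins i j r₁ e₁ r₂ e₂ hij hi hj hw =>
    obtain ⟨a, rm, em, ha, hmax⟩ := ih ⟨i, r₁, e₁, Or.inl hi⟩
    have haj : a ≠ j := by intro h; rw [h, hj] at ha; exact St.noConfusion ha
    refine ⟨a, rm, em, ?_, ?_⟩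
    · simp [cfg_update_apply, haj]; exact ha
    · intro b r' e' hb
      simp only [cfg_update_apply] at hb
      split_ifs at hb with h1
      · obtain ⟨rfl, rfl⟩ := tuple_of_follower_eq hb
        exact hmax i _ _ (Or.inl hi)
      · exact hmax b r' e' hb
  | leader_wins_inc i j r₁ e₁ r₂ e₂ rn hij hi hj hw hr1 hrm =>
    obtain ⟨a, rm, em, ha, hmax⟩ := ih ⟨i, r₁, e₁, Or.inl hi⟩
    rcases tle_total (rm, em) (rn, e₁ + 1) with hle | hle
    · refine ⟨i, rn, e₁ + 1, ?_, ?_⟩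
      · simp [cfg_update_apply]
      · intro b r' e' hb
        simp only [cfg_update_apply2, cfg_update_apply] at hb
        split_ifs at hb with h1 h2
        · obtain ⟨rfl, rfl⟩ := tuple_of_leader_eq hb; exact tle_refl _
        · obtain ⟨rfl, rfl⟩ := tuple_of_follower_eq hb
          exact tle_trans (hmax i _ _ (Or.inl hi)) hle
        · exact tle_trans (hmax b r' e' hb) hle
    · have hai : a ≠ i := by
        intro h; subst h
        obtain ⟨h1, h2⟩ := St.leader.inj (ha.symm.trans hi)
        subst h1; subst h2
        exact tlt_tle_false (tlt_succ _ _ rn) hle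
      have haj : a ≠ j := by intro h; rw [h, hj] at ha; exact St.noConfusion ha
      refine ⟨a, rm, em, ?_, ?_⟩
      · simp [cfg_update_apply, hai, haj]; exact ha
      · intro b r' e' hb
        simp only [cfg_update_apply2, cfg_update_apply] at hb
        split_ifs at hb with h1 h2
        · obtain ⟨rfl, rfl⟩ := tuple_of_leader_eq hb; exact hle
        · obtain ⟨rfl, rfl⟩ := tuple_of_follower_eq hb
          exact hmax i _ _ (Or.inl hi)
        · exact hmax b r' e' hb

lemma reachable_good {N m : ℕ} {c : Cfg N} (hc : Reachable N m (initCfg N) c) :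
    HasTuple c → Good c := by
  induction hc with
  | refl =>
    rintro ⟨a, r, e, h⟩
    rcases h with h | h <;> exact absurd h (by simp [initCfg])
  | tail _ hstep ih => exact fun _ => step_good hstep ih

end LeaderElectionProtocol

open LeaderElectionProtocol

/-- in the Leader Election protocol, in every configuration reachable from
the all-`l0` initial configuration in which at least one agent holds a tuple, the
lexicographically maximum tuple present among all agents is held by at least one agent
whose role is leader. -/
theorem max_tuple_held_by_leader (N m : ℕ) (hN : 2 ≤ N) (c : Cfg N)
    (hc : Reachable N m (initCfg N) c)
    (hx : ∃ a : Fin N, ∃ r e : ℕ, c a = St.leader r e ∨ c a = St.follower r e) :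
    ∃ a : Fin N, ∃ r e : ℕ, c a = St.leader r e ∧
      ∀ b : Fin N, ∀ r' e' : ℕ,
        (c b = St.leader r' e' ∨ c b = St.follower r' e') → tle (r', e') (r, e) :=
  reachable_good hc hx
end
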